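/- arXiv:1503.05235 — 4 statements merged into one kernel-verified Lean document; each statement's English description precedes it below -/
import Mathlib

section
/- Theorem 3.1: Let 1 ≤ a < b ≤ ∞, let ν, ζ ∈ Ψ(a,b), and set ψ(p) = ν(p)/ζ(p). Let A be an invertible d×d real matrix and f ∈ Gψ. Then f∘A ∈ Gν with ‖f∘A‖_{Gν} ≤ φ(Gζ, |det A|^{-1}) · ‖f‖_{Gψ}, where φ(Gζ, δ) = sup_{p∈(a,b)} δ^{1/p}/ζ(p). -/
open MeasureTheory ENNReal

/-- The Grand Lebesgue norm `‖f‖_{Gψ} = sup_{p ∈ (a,b)} ‖f‖_{L^p}/ψ(p)`. -/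
noncomputable def gnorm (a b : ℝ≥0∞) (ψ : ℝ≥0∞ → ℝ) {X : Type*} [MeasurableSpace X]
    (μ : Measure X) (f : X → ℝ) : ℝ≥0∞ :=
  ⨆ p ∈ Set.Ioo a b, eLpNorm f p μ / ENNReal.ofReal (ψ p)

open Matrix

/-- **Theorem 3.1.** For `ν, ζ ∈ Ψ(a,b)`, `ψ = ν/ζ`, `A` invertible and
`f ∈ Gψ`, one has `‖f∘A‖_{Gν} ≤ φ(Gζ, |det A|⁻¹) ‖f‖_{Gψ}` where
`φ(Gζ, δ) = sup_{p ∈ (a,b)} δ^{1/p}/ζ(p)`. -/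
theorem gnorm_dilation_bound {d : ℕ} (a b : ℝ≥0∞) (ha : 1 ≤ a) (hab : a < b)
    (ν ζ : ℝ≥0∞ → ℝ)
    (hνc : ContinuousOn ν (Set.Ioo a b)) (hν : ∃ c > 0, ∀ p ∈ Set.Ioo a b, c ≤ ν p)
    (hζc : ContinuousOn ζ (Set.Ioo a b)) (hζ : ∃ c > 0, ∀ p ∈ Set.Ioo a b, c ≤ ζ p)
    (A : Matrix (Fin d) (Fin d) ℝ) (hA : A.det ≠ 0)
    (f : (Fin d → ℝ) → ℝ) (hf : AEStronglyMeasurable f volume)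
    (hfG : gnorm a b (fun p => ν p / ζ p) volume f < ∞)
    (hφ : (⨆ p ∈ Set.Ioo a b,
        (ENNReal.ofReal |A.det|)⁻¹ ^ (1 / p.toReal) / ENNReal.ofReal (ζ p)) < ∞) :
    gnorm a b ν volume (fun x => f (A.mulVec x))
      ≤ (⨆ p ∈ Set.Ioo a b,
          (ENNReal.ofReal |A.det|)⁻¹ ^ (1 / p.toReal) / ENNReal.ofReal (ζ p))
        * gnorm a b (fun p => ν p / ζ p) volume f := by
  obtain ⟨cν, hcν, hcνle⟩ := hν
  obtain ⟨cζ, hcζ, hcζle⟩ := hζ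
  set c : ℝ≥0∞ := (ENNReal.ofReal |A.det|)⁻¹ with hc
  have hdetpos : 0 < |A.det| := abs_pos.mpr hA
  have hmap : Measure.map (Matrix.toLin' A) volume = c • volume := by
    rw [Real.map_matrix_volume_pi_eq_smul_volume_pi hA, abs_inv,
      ENNReal.ofReal_inv_of_pos hdetpos]
  have hfc : AEStronglyMeasurable f (c • (volume : Measure (Fin d → ℝ))) :=
    hf.mono_ac Measure.smul_absolutelyContinuous
  refine iSup₂_le fun p hp => ?_
  have hp0 : p ≠ 0 := (zero_lt_one.trans_le (ha.trans hp.1.le)).ne'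
  have hpt : p ≠ ∞ := hp.2.ne_top
  have hkey : eLpNorm (fun x => f (A.mulVec x)) p volume
      = c ^ (1 / p.toReal) * eLpNorm f p volume := by
    have h1 : (fun x => f (A.mulVec x)) = f ∘ (Matrix.toLin' A) := by
      funext x; simp [Matrix.toLin'_apply]
    rw [h1, ← eLpNorm_map_measure (hmap ▸ hfc) (Matrix.toLin' A).continuous_of_finiteDimensional.measurable.aemeasurable,
      hmap, eLpNorm_smul_measure_of_ne_zero (by simp [hc, hdetpos.le, hdetpos.ne']) ,
      smul_eq_mul, one_div, ENNReal.toReal_inv, one_div]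
  have hζp : 0 < ζ p := lt_of_lt_of_le hcζ (hcζle p hp)
  have hνζ : ENNReal.ofReal (ν p) = ENNReal.ofReal (ν p / ζ p) * ENNReal.ofReal (ζ p) := by
    rw [← ENNReal.ofReal_mul (div_nonneg (le_trans hcν.le (hcνle p hp)) hζp.le),
      div_mul_cancel₀ _ hζp.ne']
  have hinv : (ENNReal.ofReal (ν p))⁻¹
      = (ENNReal.ofReal (ζ p))⁻¹ * (ENNReal.ofReal (ν p / ζ p))⁻¹ := by
    rw [hνζ, ENNReal.mul_inv (Or.inr ENNReal.ofReal_ne_top)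
      (Or.inr (by simpa using hζp)), mul_comm]
  calc eLpNorm (fun x => f (A.mulVec x)) p volume / ENNReal.ofReal (ν p)
      = (c ^ (1 / p.toReal) / ENNReal.ofReal (ζ p))
        * (eLpNorm f p volume / ENNReal.ofReal (ν p / ζ p)) := by
        rw [hkey, div_eq_mul_inv, hinv]; simp only [div_eq_mul_inv]; ring
    _ ≤ (⨆ p ∈ Set.Ioo a b, c ^ (1 / p.toReal) / ENNReal.ofReal (ζ p))
        * gnorm a b (fun p => ν p / ζ p) volume f := by
        exact mul_le_mul' (le_iSup₂ (f := fun p _ => c ^ (1 / p.toReal) / ENNReal.ofReal (ζ p)) p hp)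
          (le_iSup₂ (f := fun p _ => eLpNorm f p volume / ENNReal.ofReal (ν p / ζ p)) p hp)
end

section
/- Sharpness of Theorem 3.1: Let 1 ≤ a < b ≤ ∞, ν, ζ ∈ Ψ(a,b), ψ = ν/ζ, and A invertible. If f is a nonzero function whose natural function equals ψ, i.e. ‖f‖_{L^p} = ψ(p) for all p ∈ (a,b), then ‖f∘A‖_{Gν} = φ(Gζ, |det A|^{-1}) · ‖f‖_{Gψ}, where ‖f‖_{Gψ} = 1. -/
open MeasureTheory ENNReal

open Matrix

/-- **sharpness of Theorem 3.1.** If `f` is a nonzero function whose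
natural function is `ψ = ν/ζ`, i.e. `‖f‖_{L^p} = ψ(p)` for all `p ∈ (a,b)`, then
`‖f∘A‖_{Gν} = φ(Gζ, |det A|⁻¹) ‖f‖_{Gψ}` and `‖f‖_{Gψ} = 1`. -/
theorem gnorm_dilation_sharp {d : ℕ} (a b : ℝ≥0∞) (ha : 1 ≤ a) (hab : a < b)
    (ν ζ : ℝ≥0∞ → ℝ)
    (hνc : ContinuousOn ν (Set.Ioo a b)) (hν : ∃ c > 0, ∀ p ∈ Set.Ioo a b, c ≤ ν p)
    (hζc : ContinuousOn ζ (Set.Ioo a b)) (hζ : ∃ c > 0, ∀ p ∈ Set.Ioo a b, c ≤ ζ p)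
    (A : Matrix (Fin d) (Fin d) ℝ) (hA : A.det ≠ 0)
    (f : (Fin d → ℝ) → ℝ) (hf : AEStronglyMeasurable f volume)
    (hf0 : ¬ f =ᵐ[volume] 0)
    (hnat : ∀ p ∈ Set.Ioo a b, eLpNorm f p volume = ENNReal.ofReal (ν p / ζ p)) :
    gnorm a b ν volume (fun x => f (A.mulVec x))
      = (⨆ p ∈ Set.Ioo a b,
          (ENNReal.ofReal |A.det|)⁻¹ ^ (1 / p.toReal) / ENNReal.ofReal (ζ p))
        * gnorm a b (fun p => ν p / ζ p) volume f ∧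
      gnorm a b (fun p => ν p / ζ p) volume f = 1 := by
  obtain ⟨c, hc, hcν⟩ := hν
  obtain ⟨c', hc', hcζ⟩ := hζ
  -- positivity facts
  have hψ : ∀ p ∈ Set.Ioo a b, 0 < ν p / ζ p := fun p hp =>
    div_pos (lt_of_lt_of_le hc (hcν p hp)) (lt_of_lt_of_le hc' (hcζ p hp))
  have hIoo : (Set.Ioo a b).Nonempty := Set.nonempty_Ioo.2 hab
  -- second claim
  have h2 : gnorm a b (fun p => ν p / ζ p) volume f = 1 := by
    rw [gnorm]
    have : ∀ p ∈ Set.Ioo a b,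
        eLpNorm f p volume / ENNReal.ofReal (ν p / ζ p) = 1 := fun p hp => by
      rw [hnat p hp, ENNReal.div_self (by simpa using (hψ p hp)) ofReal_ne_top]
    calc (⨆ p ∈ Set.Ioo a b, eLpNorm f p volume / ENNReal.ofReal (ν p / ζ p))
        = ⨆ p ∈ Set.Ioo a b, (1 : ℝ≥0∞) :=
          iSup_congr fun p => iSup_congr fun hp => this p hp
      _ = 1 := biSup_const hIoo
  refine ⟨?_, h2⟩
  rw [h2, mul_one, gnorm]
  -- change of variables
  have hdet : LinearMap.det (Matrix.toLin' A) ≠ 0 := by rwa [LinearMap.det_toLin']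
  have hmap : Measure.map (Matrix.toLin' A) volume
      = ENNReal.ofReal |A.det|⁻¹ • volume := by
    rw [Measure.map_linearMap_addHaar_eq_smul_addHaar volume hdet, LinearMap.det_toLin',
      abs_inv]
  have hDinv : ENNReal.ofReal |A.det|⁻¹ = (ENNReal.ofReal |A.det|)⁻¹ :=
    ENNReal.ofReal_inv_of_pos (abs_pos.2 hA)
  refine iSup_congr fun p => iSup_congr fun hp => ?_
  have hp0 : p ≠ 0 := fun h => by
    have := lt_of_le_of_lt ha hp.1; simp [h] at this
  have hptop : p ≠ ∞ := (lt_of_lt_of_le hp.2 le_top).ne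
  have hcomp : eLpNorm (fun x => f (A.mulVec x)) p volume
      = (ENNReal.ofReal |A.det|)⁻¹ ^ (1 / p.toReal) * eLpNorm f p volume := by
    have hfm : AEStronglyMeasurable f (Measure.map (Matrix.toLin' A) volume) := by
      rw [hmap]; exact hf.mono_ac Measure.smul_absolutelyContinuous
    have hAm : AEMeasurable (Matrix.toLin' A) volume :=
      (Matrix.toLin' A).continuous_of_finiteDimensional.measurable.aemeasurable
    have := eLpNorm_map_measure (p := p) hfm hAm
    rw [hmap, eLpNorm_smul_measure_of_ne_zero (c := ENNReal.ofReal |A.det|⁻¹)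
      ((ENNReal.ofReal_pos.2 (by positivity)).ne') f p volume] at this
    have heq : (fun x => f (A.mulVec x)) = f ∘ Matrix.toLin' A := by
      funext x; simp [Matrix.toLin'_apply]
    rw [heq, ← this, hDinv, smul_eq_mul]
    simp only [one_div, ENNReal.toReal_inv]
  rw [hcomp, hnat p hp,
    ENNReal.ofReal_div_of_pos (lt_of_lt_of_le hc' (hcζ p hp))]
  set x := (ENNReal.ofReal |A.det|)⁻¹ ^ (1 / p.toReal)
  set N := ENNReal.ofReal (ν p)
  set Z := ENNReal.ofReal (ζ p)
  have hN0 : N ≠ 0 := by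
    simp [N, lt_of_lt_of_le hc (hcν p hp)]
  have hNt : N ≠ ∞ := ofReal_ne_top
  rw [mul_div_assoc]
  congr 1
  rw [div_eq_mul_inv, div_eq_mul_inv, mul_right_comm,
    ENNReal.mul_inv_cancel hN0 hNt, one_mul]
end

section
/- Theorem 4.1: Let α > 0, 1 ≤ a < b ≤ ∞, ψ, ζ ∈ Ψ(a,b), and define ν(p) = ψ(p)·ζ(p). Let A be an invertible d×d matrix. Then for every f with ‖f‖_{Gψ_α} < ∞ (where the weighted GLS norm uses |f|_{p,α} = (∫|f(x)|^p |x|^α dx)^{1/p}), one has ‖f∘A‖_{Gν_α} ≤ sup_{p∈(a,b)} (|det A|^{-1} ‖A^{-1}‖^{α})^{1/p}/ζ(p) · ‖f‖_{Gψ_α}. -/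
open MeasureTheory ENNReal Matrix

/-- The weighted Grand Lebesgue norm `‖f‖_{Gψ_α} = sup_{p ∈ (a,b)} |f|_{p,α}/ψ(p)`,
realized as the GLS norm with respect to the weighted measure `|x|^α dx`. -/
noncomputable def gnormW (a b : ℝ≥0∞) (ψ : ℝ≥0∞ → ℝ) {X : Type*} [MeasurableSpace X]
    (μ : Measure X) (f : X → ℝ) : ℝ≥0∞ :=
  ⨆ p ∈ Set.Ioo a b, eLpNorm f p μ / ENNReal.ofReal (ψ p)

/-- The weight measure `μ_α(D) = ∫_D ‖x‖^α dx` on `ℝ^d` with the Euclidean norm. -/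
noncomputable def wMeasure (d : ℕ) (α : ℝ) : Measure (EuclideanSpace ℝ (Fin d)) :=
  volume.withDensity fun x => ENNReal.ofReal (‖x‖ ^ α)

lemma det_toEuclideanCLM_aux {d : ℕ} (A : Matrix (Fin d) (Fin d) ℝ) :
    LinearMap.det (((Matrix.toEuclideanCLM (𝕜 := ℝ) A :
        EuclideanSpace ℝ (Fin d) →L[ℝ] EuclideanSpace ℝ (Fin d))) :
        EuclideanSpace ℝ (Fin d) →ₗ[ℝ] EuclideanSpace ℝ (Fin d)) = A.det := by
  rw [Matrix.coe_toEuclideanCLM_eq_toEuclideanLin]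
  set e := WithLp.linearEquiv 2 ℝ (Fin d → ℝ)
  have h : Matrix.toEuclideanLin A =
      (e.symm : (Fin d → ℝ) →ₗ[ℝ] EuclideanSpace ℝ (Fin d)) ∘ₗ
        (Matrix.toLin' A ∘ₗ ((e.symm.symm) : EuclideanSpace ℝ (Fin d) →ₗ[ℝ] (Fin d → ℝ))) := rfl
  rw [h, LinearMap.det_conj (Matrix.toLin' A) e.symm, LinearMap.det_toLin']

lemma lintegral_comp_CLM {d : ℕ} (A : Matrix (Fin d) (Fin d) ℝ) (hA : IsUnit A.det)
    (g : EuclideanSpace ℝ (Fin d) → ℝ≥0∞) (hg : AEMeasurable g volume) :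
    ∫⁻ x, g (Matrix.toEuclideanCLM (𝕜 := ℝ) A x) ∂volume
      = ENNReal.ofReal |A.det|⁻¹ * ∫⁻ y, g y ∂volume := by
  have hdet := det_toEuclideanCLM_aux A
  have hne : LinearMap.det (((Matrix.toEuclideanCLM (𝕜 := ℝ) A :
      EuclideanSpace ℝ (Fin d) →L[ℝ] EuclideanSpace ℝ (Fin d))) :
      EuclideanSpace ℝ (Fin d) →ₗ[ℝ] EuclideanSpace ℝ (Fin d)) ≠ 0 := by
    rw [hdet]; exact hA.ne_zero
  have hmap : Measure.map (Matrix.toEuclideanCLM (𝕜 := ℝ) A) volume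
      = ENNReal.ofReal |A.det|⁻¹ • volume := by
    have h0 := Measure.map_linearMap_addHaar_eq_smul_addHaar (volume (α := EuclideanSpace ℝ (Fin d))) hne
    have hco : ⇑(((Matrix.toEuclideanCLM (𝕜 := ℝ) A :
        EuclideanSpace ℝ (Fin d) →L[ℝ] EuclideanSpace ℝ (Fin d))) :
        EuclideanSpace ℝ (Fin d) →ₗ[ℝ] EuclideanSpace ℝ (Fin d)) = ⇑(Matrix.toEuclideanCLM (𝕜 := ℝ) A) := rfl
    rw [hco] at h0
    have := h0
    rw [hdet, abs_inv] at this
    exact this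
  have hgm : AEMeasurable g (Measure.map (Matrix.toEuclideanCLM (𝕜 := ℝ) A) volume) := by
    rw [hmap]; exact hg.smul_measure _
  rw [← lintegral_map' hgm ((Matrix.toEuclideanCLM (𝕜 := ℝ) A).continuous.measurable.aemeasurable),
    hmap, lintegral_smul_measure, smul_eq_mul]

/-- **Theorem 4.1.** For `ψ, ζ ∈ Ψ(a,b)`, `ν = ψ·ζ`, `A` invertible and
`f` with finite weighted norm `‖f‖_{Gψ_α}`, one has
`‖f∘A‖_{Gν_α} ≤ (sup_{p∈(a,b)} (|det A|⁻¹ ‖A⁻¹‖^α)^{1/p}/ζ(p)) · ‖f‖_{Gψ_α}`. -/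
theorem gnorm_weighted_dilation_bound {d : ℕ} (a b : ℝ≥0∞) (ha : 1 ≤ a) (hab : a < b)
    (α : ℝ) (hα : 0 < α)
    (ψ ζ : ℝ≥0∞ → ℝ)
    (hψc : ContinuousOn ψ (Set.Ioo a b)) (hψ : ∃ c > 0, ∀ p ∈ Set.Ioo a b, c ≤ ψ p)
    (hζc : ContinuousOn ζ (Set.Ioo a b)) (hζ : ∃ c > 0, ∀ p ∈ Set.Ioo a b, c ≤ ζ p)
    (A : Matrix (Fin d) (Fin d) ℝ) (hA : IsUnit A.det)
    (f : EuclideanSpace ℝ (Fin d) → ℝ)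
    (hf : AEStronglyMeasurable f (wMeasure d α))
    (hfG : gnormW a b ψ (wMeasure d α) f < ∞) :
    gnormW a b (fun p => ψ p * ζ p) (wMeasure d α)
        (fun x => f (Matrix.toEuclideanCLM (𝕜 := ℝ) A x))
      ≤ (⨆ p ∈ Set.Ioo a b,
          (ENNReal.ofReal (|A.det|⁻¹ * ‖Matrix.toEuclideanCLM (𝕜 := ℝ) A⁻¹‖ ^ α))
              ^ (1 / p.toReal) / ENNReal.ofReal (ζ p))
        * gnormW a b ψ (wMeasure d α) f := by
  classical
  obtain ⟨cψ, hcψ, hψlb⟩ := hψ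
  obtain ⟨cζ, hcζ, hζlb⟩ := hζ
  set T := Matrix.toEuclideanCLM (𝕜 := ℝ) A with hT
  set T' := Matrix.toEuclideanCLM (𝕜 := ℝ) A⁻¹ with hT'
  set w : EuclideanSpace ℝ (Fin d) → ℝ≥0∞ := fun x => ENNReal.ofReal (‖x‖ ^ α) with hw
  have hwc : Continuous w := by
    exact ENNReal.continuous_ofReal.comp (continuous_norm.rpow_const (fun x => Or.inr hα.le))
  have hwm : Measurable w := hwc.measurable
  have hwlt : ∀ᵐ x ∂(volume : Measure (EuclideanSpace ℝ (Fin d))), w x < ∞ :=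
    Filter.Eventually.of_forall fun x => ofReal_lt_top
  -- inversion identity
  have hinv : ∀ x, T' (T x) = x := by
    intro x
    have h1 : T' * T = 1 := by
      rw [hT, hT', ← _root_.map_mul, Matrix.nonsing_inv_mul A hA, _root_.map_one]
    calc T' (T x) = (T' * T) x := rfl
      _ = x := by rw [h1]; rfl
  -- AEMeasurable f w.r.t. volume
  have hfm : AEMeasurable f (volume : Measure (EuclideanSpace ℝ (Fin d))) := by
    rcases Nat.eq_zero_or_pos d with hd | hd
    · subst hd
      haveI : Subsingleton (EuclideanSpace ℝ (Fin 0)) :=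
        inferInstance
      exact (Subsingleton.measurable (f := f)).aemeasurable
    · haveI : Nonempty (Fin d) := ⟨⟨0, hd⟩⟩
      haveI : Nontrivial (EuclideanSpace ℝ (Fin d)) :=
        inferInstance
      have hac : (volume : Measure (EuclideanSpace ℝ (Fin d))) ≪ wMeasure d α := by
        refine withDensity_absolutelyContinuous' hwm.aemeasurable ?_
        have hsub : {x : EuclideanSpace ℝ (Fin d) | ¬ w x ≠ 0} ⊆ {0} := by
          intro x hx
          simp only [Set.mem_setOf_eq, not_not, hw] at hx
          by_contra hx0
          have hx0' : (0 : ℝ) < ‖x‖ := norm_pos_iff.mpr hx0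
          have : (0 : ℝ) < ‖x‖ ^ α := Real.rpow_pos_of_pos hx0' α
          rw [ENNReal.ofReal_eq_zero] at hx
          linarith
        rw [ae_iff]
        exact measure_mono_null hsub (measure_singleton 0)
      exact (hf.aemeasurable).mono_ac hac
  -- key eLpNorm inequality
  set C : ℝ≥0∞ := ENNReal.ofReal (|A.det|⁻¹ * ‖T'‖ ^ α) with hC
  have key : ∀ p ∈ Set.Ioo a b,
      eLpNorm (fun x => f (T x)) p (wMeasure d α)
        ≤ C ^ (1 / p.toReal) * eLpNorm f p (wMeasure d α) := by
    intro p hp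
    have hp0 : p ≠ 0 := by
      intro h; rw [h] at hp; exact (not_lt.mpr (zero_le : 0 ≤ a)).elim (by simpa using lt_of_le_of_lt (zero_le : 0 ≤ a) hp.1)
    have hptop : p ≠ ∞ := (lt_of_lt_of_le hp.2 le_top).ne
    set q := p.toReal with hq
    have hq0 : 0 < q := ENNReal.toReal_pos hp0 hptop
    rw [eLpNorm_eq_lintegral_rpow_enorm_toReal hp0 hptop, eLpNorm_eq_lintegral_rpow_enorm_toReal hp0 hptop]
    set g : EuclideanSpace ℝ (Fin d) → ℝ≥0∞ := fun y => w y * (‖f y‖₊ : ℝ≥0∞) ^ q with hg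
    have hgm : AEMeasurable g volume := hwm.aemeasurable.mul ((hfm.nnnorm.coe_nnreal_ennreal).pow_const q)
    have step1 : ∫⁻ x, ((‖f (T x)‖₊ : ℝ≥0∞)) ^ q ∂(wMeasure d α)
        = ∫⁻ x, w x * ((‖f (T x)‖₊ : ℝ≥0∞)) ^ q ∂volume := by
      rw [wMeasure, lintegral_withDensity_eq_lintegral_mul_non_measurable _ hwm hwlt]
      rfl
    have step2 : ∀ x, w x * ((‖f (T x)‖₊ : ℝ≥0∞)) ^ q
        ≤ ENNReal.ofReal (‖T'‖ ^ α) * g (T x) := by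
      intro x
      have hx : ‖x‖ ≤ ‖T'‖ * ‖T x‖ := by
        conv_lhs => rw [← hinv x]
        exact T'.le_opNorm (T x)
      have hrw : ‖x‖ ^ α ≤ ‖T'‖ ^ α * ‖T x‖ ^ α := by
        rw [← Real.mul_rpow (norm_nonneg _) (norm_nonneg _)]
        exact Real.rpow_le_rpow (norm_nonneg _) hx hα.le
      have : w x ≤ ENNReal.ofReal (‖T'‖ ^ α) * w (T x) := by
        rw [hw, ← ENNReal.ofReal_mul (Real.rpow_nonneg (norm_nonneg _) _)]
        exact ENNReal.ofReal_le_ofReal hrw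
      calc w x * ((‖f (T x)‖₊ : ℝ≥0∞)) ^ q
          ≤ (ENNReal.ofReal (‖T'‖ ^ α) * w (T x)) * ((‖f (T x)‖₊ : ℝ≥0∞)) ^ q :=
            mul_le_mul_left this _
        _ = ENNReal.ofReal (‖T'‖ ^ α) * g (T x) := by rw [hg]; ring
    have step3 : ∫⁻ x, g (T x) ∂volume = ENNReal.ofReal |A.det|⁻¹ * ∫⁻ y, g y ∂volume :=
      lintegral_comp_CLM A hA g hgm
    have step4 : ∫⁻ y, g y ∂volume = ∫⁻ y, ((‖f y‖₊ : ℝ≥0∞)) ^ q ∂(wMeasure d α) := by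
      rw [wMeasure, lintegral_withDensity_eq_lintegral_mul_non_measurable _ hwm hwlt]
      rfl
    have hCsplit : C = ENNReal.ofReal (‖T'‖ ^ α) * ENNReal.ofReal |A.det|⁻¹ := by
      rw [hC, mul_comm (|A.det|⁻¹), ENNReal.ofReal_mul (Real.rpow_nonneg (norm_nonneg _) _)]
    have main : ∫⁻ x, ((‖f (T x)‖₊ : ℝ≥0∞)) ^ q ∂(wMeasure d α)
        ≤ C * ∫⁻ y, ((‖f y‖₊ : ℝ≥0∞)) ^ q ∂(wMeasure d α) := by
      calc ∫⁻ x, ((‖f (T x)‖₊ : ℝ≥0∞)) ^ q ∂(wMeasure d α)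
          = ∫⁻ x, w x * ((‖f (T x)‖₊ : ℝ≥0∞)) ^ q ∂volume := step1
        _ ≤ ∫⁻ x, ENNReal.ofReal (‖T'‖ ^ α) * g (T x) ∂volume :=
            lintegral_mono step2
        _ = ENNReal.ofReal (‖T'‖ ^ α) * ∫⁻ x, g (T x) ∂volume :=
            lintegral_const_mul' _ _ ofReal_ne_top
        _ = C * ∫⁻ y, ((‖f y‖₊ : ℝ≥0∞)) ^ q ∂(wMeasure d α) := by
            rw [step3, step4, hCsplit, mul_assoc]
    calc (∫⁻ x, ((‖f (T x)‖₊ : ℝ≥0∞)) ^ q ∂(wMeasure d α)) ^ (1 / q)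
        ≤ (C * ∫⁻ y, ((‖f y‖₊ : ℝ≥0∞)) ^ q ∂(wMeasure d α)) ^ (1 / q) :=
          ENNReal.rpow_le_rpow main (by positivity)
      _ = C ^ (1 / q) * (∫⁻ y, ((‖f y‖₊ : ℝ≥0∞)) ^ q ∂(wMeasure d α)) ^ (1 / q) :=
          ENNReal.mul_rpow_of_nonneg _ _ (by positivity)
  -- conclude via sup manipulation
  rw [gnormW]
  refine iSup₂_le fun p hp => ?_
  have hψp : 0 < ψ p := lt_of_lt_of_le hcψ (hψlb p hp)
  have hζp : 0 < ζ p := lt_of_lt_of_le hcζ (hζlb p hp)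
  have hsplit : ENNReal.ofReal (ψ p * ζ p) = ENNReal.ofReal (ζ p) * ENNReal.ofReal (ψ p) := by
    rw [← ENNReal.ofReal_mul hζp.le, mul_comm (ζ p)]
  have h1 : eLpNorm (fun x => f (T x)) p (wMeasure d α) / ENNReal.ofReal (ψ p * ζ p)
      ≤ (C ^ (1 / p.toReal) / ENNReal.ofReal (ζ p))
        * (eLpNorm f p (wMeasure d α) / ENNReal.ofReal (ψ p)) := by
    rw [hsplit, div_eq_mul_inv, ENNReal.mul_inv (Or.inl (by simp [hζp]))
      (Or.inl ofReal_ne_top), div_eq_mul_inv, div_eq_mul_inv]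
    calc eLpNorm (fun x => f (T x)) p (wMeasure d α)
          * ((ENNReal.ofReal (ζ p))⁻¹ * (ENNReal.ofReal (ψ p))⁻¹)
        ≤ (C ^ (1 / p.toReal) * eLpNorm f p (wMeasure d α))
          * ((ENNReal.ofReal (ζ p))⁻¹ * (ENNReal.ofReal (ψ p))⁻¹) :=
          mul_le_mul_left (key p hp) _
      _ = (C ^ (1 / p.toReal) * (ENNReal.ofReal (ζ p))⁻¹)
          * (eLpNorm f p (wMeasure d α) * (ENNReal.ofReal (ψ p))⁻¹) := by ring
  refine le_trans h1 (mul_le_mul' ?_ ?_)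
  · exact le_iSup₂_of_le p hp le_rfl
  · exact le_iSup₂_of_le p hp le_rfl
end

section
/- Recurrence for ball mixed-norms: let θ⁽ᵈ⁾(p₁,…,p_d) = ‖𝟙_{B_d}‖_{p₁,…,p_d} where B_d is the Euclidean unit ball in ℝ^d and the mixed norm is iterated coordinate-wise. Then for 1 ≤ p_i < ∞, θ⁽ᵈ⁺¹⁾(p₁,…,p_{d+1}) = θ⁽ᵈ⁾(p₁,…,p_d) · B(1/2, 1 + (p_{d+1}/2)(1/p₁ + ⋯ + 1/p_d))^{1/p_{d+1}}, where B(α,β) is the Euler beta function. -/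
open MeasureTheory

/-- The anisotropic (mixed) Lebesgue norm on `ℝ^d`, with each coordinate its own factor,
defined by iterating the coordinate-wise integrals:
`‖f‖_{p₁,…,p_{d+1}} = (∫ (‖f(·,t)‖_{p₁,…,p_d})^{p_{d+1}} dt)^{1/p_{d+1}}`. -/
noncomputable def mixedNorm : ∀ d : ℕ, (Fin d → ℝ) → ((Fin d → ℝ) → ℝ) → ℝ
  | 0, _, f => |f (fun i => i.elim0)|
  | d + 1, p, f =>
      (∫ t : ℝ, (mixedNorm d (fun i => p i.castSucc) fun x => f (Fin.snoc x t))
          ^ p (Fin.last d)) ^ (1 / p (Fin.last d))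

/-- The Euler beta function `B(a,b) = Γ(a)Γ(b)/Γ(a+b)`. -/
noncomputable def eulerBeta (a b : ℝ) : ℝ :=
  Real.Gamma a * Real.Gamma b / Real.Gamma (a + b)

lemma mixedNorm_nonneg : ∀ (d : ℕ) (p : Fin d → ℝ) (f : (Fin d → ℝ) → ℝ),
    0 ≤ mixedNorm d p f
  | 0, _, f => abs_nonneg _
  | d + 1, p, f => by
      rw [mixedNorm]
      exact Real.rpow_nonneg
        (integral_nonneg fun t => Real.rpow_nonneg (mixedNorm_nonneg d _ _) _) _

lemma mixedNorm_zero : ∀ (d : ℕ) (p : Fin d → ℝ), (∀ i, p i ≠ 0) →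
    mixedNorm d p (fun _ => 0) = 0
  | 0, _, _ => by simp [mixedNorm]
  | d + 1, p, hp => by
      rw [mixedNorm]
      have h0 : (fun x : Fin d → ℝ => (0 : ℝ)) = fun _ => 0 := rfl
      simp only [mixedNorm_zero d _ (fun i => hp i.castSucc),
        Real.zero_rpow (hp (Fin.last d)), integral_zero]
      exact Real.zero_rpow (by simpa using hp (Fin.last d))

/-- Scaling property of the mixed norm. -/
lemma mixedNorm_scale : ∀ (d : ℕ) (p : Fin d → ℝ), (∀ i, 1 ≤ p i) →
    ∀ (f : (Fin d → ℝ) → ℝ) (r : ℝ), 0 < r →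
    mixedNorm d p (fun x => f (fun i => x i / r))
      = r ^ (∑ i, 1 / p i) * mixedNorm d p f
  | 0, p, _, f, r, hr => by
      simp only [mixedNorm, Finset.univ_eq_empty, Finset.sum_empty, Real.rpow_zero, one_mul]
      congr 1
      exact congrArg f (Subsingleton.elim _ _)
  | d + 1, p, hp, f, r, hr => by
      have hq : (1 : ℝ) ≤ p (Fin.last d) := hp (Fin.last d)
      have hq0 : p (Fin.last d) ≠ 0 := by linarith
      set q := p (Fin.last d) with hqdef
      set s := ∑ i : Fin d, 1 / p i.castSucc with hs
      have hs0 : 0 ≤ s := Finset.sum_nonneg fun i _ => by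
        have := hp i.castSucc; positivity
      have hrs : (0:ℝ) ≤ r ^ s := Real.rpow_nonneg hr.le _
      rw [mixedNorm, mixedNorm]
      have key : ∀ t : ℝ,
          (mixedNorm d (fun i => p i.castSucc)
            fun x => (fun y => f (fun i => y i / r)) (Fin.snoc x t))
          = r ^ s * mixedNorm d (fun i => p i.castSucc)
              (fun x => f (Fin.snoc x (t / r))) := by
        intro t
        have harg : ∀ x : Fin d → ℝ,
            (fun i : Fin (d+1) => (Fin.snoc x t : Fin (d+1) → ℝ) i / r)
              = (Fin.snoc (fun i => x i / r) (t / r) : Fin (d+1) → ℝ) := by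
          intro x
          funext i
          refine Fin.lastCases ?_ (fun j => ?_) i <;> simp
        have hfun : (fun x : Fin d → ℝ => f (fun i => (Fin.snoc x t : Fin (d+1) → ℝ) i / r))
            = fun x => (fun y => f (Fin.snoc y (t/r))) (fun i => x i / r) := by
          funext x; rw [harg x]
        show mixedNorm d (fun i => p i.castSucc)
            (fun x => f (fun i => (Fin.snoc x t : Fin (d+1) → ℝ) i / r)) = _
        rw [hfun]
        exact mixedNorm_scale d _ (fun i => hp i.castSucc) (fun y => f (Fin.snoc y (t/r))) r hr
      simp only [key]
      have hpow : ∀ t : ℝ,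
          (r ^ s * mixedNorm d (fun i => p i.castSucc)
              (fun x => f (Fin.snoc x (t / r)))) ^ q
          = (r ^ s) ^ q * (mixedNorm d (fun i => p i.castSucc)
              (fun x => f (Fin.snoc x (t / r)))) ^ q := fun t =>
        Real.mul_rpow hrs (mixedNorm_nonneg _ _ _)
      simp only [← hqdef, hpow]
      rw [integral_const_mul]
      set G : ℝ → ℝ := fun u =>
        (mixedNorm d (fun i => p i.castSucc) (fun x => f (Fin.snoc x u))) ^ q with hG
      have hGnn : ∀ u, 0 ≤ G u := fun u => Real.rpow_nonneg (mixedNorm_nonneg _ _ _) _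
      have hcomp : (∫ t : ℝ, G (t / r)) = |r| • ∫ u : ℝ, G u :=
        MeasureTheory.Measure.integral_comp_div G r
      rw [show (∫ t : ℝ, (mixedNorm d (fun i => p i.castSucc)
            (fun x => f (Fin.snoc x (t / r)))) ^ q) = ∫ t : ℝ, G (t / r) from rfl,
        hcomp, abs_of_pos hr, smul_eq_mul]
      have hInn : (0:ℝ) ≤ ∫ u, G u := integral_nonneg hGnn
      rw [← mul_assoc, Real.mul_rpow (by positivity) hInn,
        Real.mul_rpow (Real.rpow_nonneg hrs _) hr.le,
        ← Real.rpow_mul hr.le, ← Real.rpow_mul hr.le, ← Real.rpow_add hr,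
        Fin.sum_univ_castSucc (f := fun i : Fin (d+1) => 1 / p i)]
      have he : s * q * (1 / q) = s := by field_simp
      rw [he]

lemma real_betaIntegral {a b : ℝ} (ha : 0 < a) (hb : 0 < b) :
    ∫ x in (0:ℝ)..1, x ^ (a - 1) * (1 - x) ^ (b - 1) = eulerBeta a b := by
  have h := Complex.Gamma_mul_Gamma_eq_betaIntegral (s := (a:ℂ)) (t := (b:ℂ))
    (by simpa using ha) (by simpa using hb)
  have hcast : Complex.betaIntegral (a:ℂ) (b:ℂ)
      = ((∫ x in (0:ℝ)..1, x ^ (a - 1) * (1 - x) ^ (b - 1) : ℝ) : ℂ) := by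
    rw [Complex.betaIntegral, ← intervalIntegral.integral_ofReal]
    apply intervalIntegral.integral_congr
    intro x hx
    rw [Set.uIcc_of_le (by norm_num : (0:ℝ) ≤ 1)] at hx
    have hx0 : 0 ≤ x := hx.1
    have hx1 : 0 ≤ 1 - x := by linarith [hx.2]
    push_cast
    rw [Complex.ofReal_cpow hx0, Complex.ofReal_cpow hx1]
    push_cast
    ring
  rw [hcast, ← Complex.ofReal_add, Complex.Gamma_ofReal, Complex.Gamma_ofReal,
    Complex.Gamma_ofReal, ← Complex.ofReal_mul, ← Complex.ofReal_mul] at h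
  have h' := Complex.ofReal_injective h
  have hΓ : Real.Gamma (a + b) ≠ 0 := (Real.Gamma_pos_of_pos (by linarith)).ne'
  rw [eulerBeta, h']
  field_simp

lemma integral_one_sub_sq_rpow {c : ℝ} (hc : 0 ≤ c) :
    ∫ t in (-1:ℝ)..1, (1 - t ^ 2) ^ c = eulerBeta (1/2) (c + 1) := by
  set F : ℝ → ℝ := fun x => x ^ c * (1 - x) ^ c with hF
  have step1 : ∫ t in (-1:ℝ)..1, (1 - t ^ 2) ^ c
      = ∫ t in (-1:ℝ)..1, (4:ℝ) ^ c * F ((1/2) * t + 1/2) := by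
    apply intervalIntegral.integral_congr
    intro t ht
    rw [Set.uIcc_of_le (by norm_num : (-1:ℝ) ≤ 1)] at ht
    have h1 : (0:ℝ) ≤ (1/2) * t + 1/2 := by linarith [ht.1]
    have h2 : (0:ℝ) ≤ 1 - ((1/2) * t + 1/2) := by linarith [ht.2]
    rw [hF]
    simp only
    rw [← Real.mul_rpow h1 h2, ← Real.mul_rpow (by norm_num) (by nlinarith)]
    congr 1
    ring
  rw [step1, intervalIntegral.integral_const_mul,
    intervalIntegral.integral_comp_mul_add F (by norm_num : (1/2:ℝ) ≠ 0) (1/2)]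
  norm_num
  have hFint : ∫ x in (0:ℝ)..1, F x = eulerBeta (c+1) (c+1) := by
    have := real_betaIntegral (a := c+1) (b := c+1) (by linarith) (by linarith)
    simpa [hF] using this
  rw [hFint]
  -- now the Gamma identity
  have hdup := Real.Gamma_mul_Gamma_add_half (c + 1)
  have hΓ1 : 0 < Real.Gamma (c + 1) := Real.Gamma_pos_of_pos (by linarith)
  have hΓ2 : 0 < Real.Gamma (2 * (c + 1)) := Real.Gamma_pos_of_pos (by linarith)
  have hΓ3 : 0 < Real.Gamma (c + 1 + 1/2) := Real.Gamma_pos_of_pos (by linarith)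
  rw [eulerBeta, eulerBeta, Real.Gamma_one_half_eq]
  have h12 : (1/2 : ℝ) + (c + 1) = c + 1 + 1/2 := by ring
  rw [h12]
  have h4 : (4:ℝ) ^ c = 2 ^ (2 * c) := by
    rw [show (4:ℝ) = 2 ^ (2:ℝ) by norm_num [Real.rpow_natCast]]
    rw [← Real.rpow_mul (by norm_num)]
  have h2c : (4:ℝ) ^ c * 2 * 2 ^ (1 - 2 * (c+1)) = 1 := by
    rw [h4, mul_comm ((2:ℝ) ^ (2*c)) 2, mul_assoc, ← Real.rpow_add (by norm_num : (0:ℝ) < 2),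
      show (2*c + (1 - 2*(c+1)) : ℝ) = -1 by ring, Real.rpow_neg_one]
    norm_num
  have hkey : √Real.pi * Real.Gamma (c+1) / Real.Gamma (c+1+1/2)
      = 4 ^ c * 2 * Real.Gamma (c+1) * Real.Gamma (c+1) / Real.Gamma (2*(c+1)) := by
    rw [div_eq_div_iff hΓ3.ne' hΓ2.ne']
    linear_combination (-((4:ℝ)^c*2*Real.Gamma (c+1))) * hdup
      - (Real.Gamma (c+1)*Real.Gamma (2*(c+1))*√Real.pi) * h2c
  rw [show c + 1 + (c + 1) = 2 * (c + 1) by ring, hkey]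
  ring


/-- Recurrence for the mixed norms `θ⁽ᵈ⁾` of the indicators of the
Euclidean unit balls:
`θ⁽ᵈ⁺¹⁾(p₁,…,p_{d+1}) = θ⁽ᵈ⁾(p₁,…,p_d) · B(1/2, 1 + (p_{d+1}/2)·∑ᵢ 1/pᵢ)^{1/p_{d+1}}`. -/
theorem mixed_norm_ball_recurrence (d : ℕ) (p : Fin (d + 1) → ℝ) (hp : ∀ i, 1 ≤ p i) :
    mixedNorm (d + 1) p
        (Set.indicator {x : Fin (d + 1) → ℝ | ∑ i, x i ^ 2 ≤ 1} fun _ => 1)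
      = mixedNorm d (fun i => p i.castSucc)
          (Set.indicator {x : Fin d → ℝ | ∑ i, x i ^ 2 ≤ 1} fun _ => 1)
        * eulerBeta (1 / 2)
            (1 + p (Fin.last d) / 2 * ∑ i : Fin d, 1 / p i.castSucc)
          ^ (1 / p (Fin.last d)) := by
  have hq1 : (1:ℝ) ≤ p (Fin.last d) := hp (Fin.last d)
  have hq0' : (0:ℝ) < p (Fin.last d) := by linarith
  have hq0 : p (Fin.last d) ≠ 0 := hq0'.ne'
  set q := p (Fin.last d) with hqdef
  set s := ∑ i : Fin d, 1 / p i.castSucc with hsdef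
  have hs0 : 0 ≤ s := Finset.sum_nonneg fun i _ => by
    have := hp i.castSucc; positivity
  set θ := mixedNorm d (fun i => p i.castSucc)
    (Set.indicator {x : Fin d → ℝ | ∑ i, x i ^ 2 ≤ 1} fun _ => 1) with hθdef
  have hθ : 0 ≤ θ := mixedNorm_nonneg _ _ _
  -- the slice at height t
  set H : ℝ → ℝ := fun t => mixedNorm d (fun i => p i.castSucc)
    (fun x => Set.indicator {x : Fin (d+1) → ℝ | ∑ i, x i ^ 2 ≤ 1}
      (fun _ => 1) (Fin.snoc x t)) with hHdef
  have hsum : ∀ (x : Fin d → ℝ) (t : ℝ),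
      (∑ i : Fin (d+1), ((Fin.snoc x t : Fin (d+1) → ℝ) i) ^ 2)
        = (∑ i : Fin d, x i ^ 2) + t ^ 2 := by
    intro x t
    rw [Fin.sum_univ_castSucc]
    simp
  have hslice_lt : ∀ t : ℝ, t ^ 2 < 1 → H t = Real.sqrt (1 - t^2) ^ s * θ := by
    intro t ht
    have h1t : (0:ℝ) < 1 - t^2 := by linarith
    have hr : 0 < Real.sqrt (1 - t^2) := Real.sqrt_pos.mpr h1t
    have hr2 : Real.sqrt (1 - t^2) ^ 2 = 1 - t^2 := Real.sq_sqrt h1t.le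
    have harg : (fun x : Fin d → ℝ =>
        Set.indicator {x : Fin (d+1) → ℝ | ∑ i, x i ^ 2 ≤ 1} (fun _ => (1:ℝ)) (Fin.snoc x t))
        = fun x => Set.indicator {x : Fin d → ℝ | ∑ i, x i ^ 2 ≤ 1}
            (fun _ => (1:ℝ)) (fun i => x i / Real.sqrt (1 - t^2)) := by
      funext x
      simp only [Set.indicator_apply, Set.mem_setOf_eq, hsum]
      congr 1
      simp only [eq_iff_iff, div_pow, ← Finset.sum_div]
      rw [hr2, div_le_one h1t]
      constructor <;> intro h <;> linarith
    exact (congrArg (mixedNorm d fun i => p i.castSucc) harg).trans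
      (mixedNorm_scale d (fun i => p i.castSucc) (fun i => hp i.castSucc)
        (Set.indicator {x : Fin d → ℝ | ∑ i, x i ^ 2 ≤ 1} fun _ => 1) _ hr)
  have hslice_gt : ∀ t : ℝ, 1 < t ^ 2 → H t = 0 := by
    intro t ht
    have harg : (fun x : Fin d → ℝ =>
        Set.indicator {x : Fin (d+1) → ℝ | ∑ i, x i ^ 2 ≤ 1} (fun _ => (1:ℝ)) (Fin.snoc x t))
        = fun _ => (0:ℝ) := by
      funext x
      apply Set.indicator_of_notMem
      simp only [Set.mem_setOf_eq, hsum, not_le]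
      have : 0 ≤ ∑ i : Fin d, x i ^ 2 := Finset.sum_nonneg fun i _ => sq_nonneg _
      linarith
    exact (congrArg (mixedNorm d fun i => p i.castSucc) harg).trans
      (mixedNorm_zero d (fun i => p i.castSucc)
        (fun i => (by have := hp i.castSucc; positivity)))
  have hae : (fun t : ℝ => H t ^ q) =ᵐ[volume]
      fun t => θ ^ q * Set.indicator (Set.Ioo (-1:ℝ) 1)
        (fun t => (1 - t^2) ^ (s * q / 2)) t := by
    have hnull : volume ({-1, 1} : Set ℝ) = 0 :=
      (Set.countable_insert.mpr (Set.countable_singleton _)).measure_zero _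
    filter_upwards [measure_eq_zero_iff_ae_notMem.mp hnull] with t ht
    have hne : t ^ 2 ≠ 1 := by
      intro h
      have h2 : (t - 1) * (t + 1) = 0 := by nlinarith
      rcases mul_eq_zero.mp h2 with h3 | h3
      · have h4 : t = 1 := by linarith
        exact ht (by simp [h4])
      · have h4 : t = -1 := by linarith
        exact ht (by simp [h4])
    rcases lt_or_gt_of_ne hne with hlt | hgt
    · have hmem : t ∈ Set.Ioo (-1:ℝ) 1 := by
        constructor <;> nlinarith
      rw [Set.indicator_of_mem hmem, hslice_lt t hlt]
      have h1t : (0:ℝ) ≤ 1 - t^2 := by linarith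
      rw [Real.mul_rpow (Real.rpow_nonneg (Real.sqrt_nonneg _) _) hθ,
        Real.sqrt_eq_rpow, ← Real.rpow_mul h1t, ← Real.rpow_mul h1t,
        show 1/2 * s * q = s * q / 2 by ring, mul_comm]
    · have hnotmem : t ∉ Set.Ioo (-1:ℝ) 1 := by
        simp only [Set.mem_Ioo, not_and_or, not_lt]
        rcases le_or_gt t 0 with h | h
        · left; nlinarith
        · right; nlinarith
      rw [Set.indicator_of_notMem hnotmem, hslice_gt t hgt, Real.zero_rpow hq0, mul_zero]
  rw [mixedNorm]
  rw [show (∫ t : ℝ, (mixedNorm d (fun i => p i.castSucc)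
      fun x => Set.indicator {x : Fin (d+1) → ℝ | ∑ i, x i ^ 2 ≤ 1}
        (fun _ => 1) (Fin.snoc x t)) ^ p (Fin.last d)) = ∫ t : ℝ, H t ^ q from rfl]
  rw [← hqdef, integral_congr_ae hae, integral_const_mul, integral_indicator measurableSet_Ioo,
    ← integral_Ioc_eq_integral_Ioo,
    ← intervalIntegral.integral_of_le (by norm_num : (-1:ℝ) ≤ 1),
    integral_one_sub_sq_rpow (by positivity)]
  have hBpos : 0 < eulerBeta (1/2) (s * q / 2 + 1) := by
    rw [eulerBeta]
    have g1 : 0 < Real.Gamma (1/2) := Real.Gamma_pos_of_pos (by norm_num)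
    have g2 : 0 < Real.Gamma (s * q / 2 + 1) := Real.Gamma_pos_of_pos (by positivity)
    have g3 : 0 < Real.Gamma (1/2 + (s * q / 2 + 1)) := Real.Gamma_pos_of_pos (by positivity)
    positivity
  rw [Real.mul_rpow (Real.rpow_nonneg hθ _) hBpos.le, ← Real.rpow_mul hθ,
    mul_one_div, div_self hq0, Real.rpow_one,
    show s * q / 2 + 1 = 1 + q / 2 * s by ring]
end
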